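/- arXiv:1203.2662 — 5 statements merged into one kernel-verified Lean document; each statement's English description precedes it below -/
import Mathlib

section
/- Let η be a nondegenerate alternating bilinear map on V with values in V' and ρ the induced semiform on Y = V' × V. Suppose L₁ is an affine line in Y whose all pairs of points are ≈-related (an isotropic line) and every affine line parallel to L₁ is also isotropic. Then L₁ has direction vector zero (contradiction); equivalently, for every isotropic line L₁ there exists a parallel affine line L₂ that is not isotropic. -/
theorem stmt12 {F V V' : Type*} [Field F] [AddCommGroup V] [Module F V]
    [AddCommGroup V'] [Module F V']
    (h2 : (2 : F) ≠ 0) (η : V →ₗ[F] V →ₗ[F] V') (halt : ∀ u : V, η u u = 0)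
    (hnd : ∀ u : V, u ≠ 0 → ∃ y : V, η u y ≠ 0)
    (ρ : (V' × V) → (V' × V) → V')
    (hρ : ∀ p q : V' × V, ρ p q = η p.2 q.2 - (p.1 - q.1))
    (p d : V' × V) (hd : d ≠ 0)
    (hiso : ∀ α β : F, ρ (p + α • d) (p + β • d) = 0) :
    ∃ q : V' × V, ¬ (∀ α β : F, ρ (q + α • d) (q + β • d) = 0) := by
  have hanti : ∀ u v : V, η u v = - η v u := by
    intro u v
    have h := halt (u + v)
    simp only [map_add, LinearMap.add_apply, halt] at h
    linear_combination (norm := abel) h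
  -- key: from isotropy of the p-line, η p.2 d.2 + d.1 = 0
  have hkey : η p.2 d.2 + d.1 = 0 := by
    have h := hiso 0 1
    rw [hρ] at h
    simp only [zero_smul, one_smul, add_zero, Prod.fst_add, Prod.snd_add] at h
    simp only [map_add, LinearMap.add_apply, halt] at h
    linear_combination (norm := abel) h
  by_cases hd2 : d.2 = 0
  · exfalso
    apply hd
    have hd1 : d.1 = 0 := by
      have := hkey
      rw [hd2] at this
      simpa using this
    exact Prod.ext hd1 hd2
  · obtain ⟨y, hy⟩ := hnd d.2 hd2
    refine ⟨(0, p.2 + y), fun h => ?_⟩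
    have h01 := h 0 1
    rw [hρ] at h01
    simp only [zero_smul, one_smul, add_zero, Prod.fst_add, Prod.snd_add] at h01
    simp only [map_add, LinearMap.add_apply, halt] at h01
    apply hy
    have hyd : η y d.2 = 0 := by
      linear_combination (norm := abel) h01 - hkey - hanti y p.2
    rw [hanti d.2 y, hyd, neg_zero]
end

section
/- Let ρ be the semiform on Y = V' × V induced by an alternating bilinear map η, with isotropic lines defined by ρ vanishing on pairs of points. If L₁ ≠ L₂ are isotropic lines through a common point p, then every affine line through p contained in the affine plane spanned by L₁ and L₂ is isotropic. (Hence the incidence structure of points and isotropic lines is a Γ-space.) -/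
theorem stmt13 {F V V' : Type*} [Field F] [AddCommGroup V] [Module F V]
    [AddCommGroup V'] [Module F V']
    (h2 : (2 : F) ≠ 0) (η : V →ₗ[F] V →ₗ[F] V') (halt : ∀ u : V, η u u = 0)
    (ρ : (V' × V) → (V' × V) → V')
    (hρ : ∀ p q : V' × V, ρ p q = η p.2 q.2 - (p.1 - q.1))
    (p d₁ d₂ : V' × V) (hd₁ : d₁ ≠ 0) (hd₂ : d₂ ≠ 0)
    (hlines : { x : V' × V | ∃ α : F, x = p + α • d₁ } ≠
              { x : V' × V | ∃ α : F, x = p + α • d₂ })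
    (hiso₁ : ∀ α β : F, ρ (p + α • d₁) (p + β • d₁) = 0)
    (hiso₂ : ∀ α β : F, ρ (p + α • d₂) (p + β • d₂) = 0) :
    ∀ c₁ c₂ : F, ∀ α β : F,
      ρ (p + α • (c₁ • d₁ + c₂ • d₂)) (p + β • (c₁ • d₁ + c₂ • d₂)) = 0 := by
  have hskew : ∀ x y : V, η x y = - η y x := by
    intro x y
    have h := halt (x + y)
    simp only [map_add, LinearMap.add_apply, halt, zero_add, add_zero] at h
    exact eq_neg_of_add_eq_zero_right h
  have h₁ : η p.2 d₁.2 = -d₁.1 := by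
    have h := hiso₁ 0 1
    rw [hρ] at h
    simp only [zero_smul, add_zero, one_smul, Prod.fst_add, Prod.snd_add,
      map_add, halt, zero_add] at h
    have h' : η p.2 d₁.2 + d₁.1 = 0 := by
      rw [← h]; abel
    exact eq_neg_of_add_eq_zero_left h'
  have h₂ : η p.2 d₂.2 = -d₂.1 := by
    have h := hiso₂ 0 1
    rw [hρ] at h
    simp only [zero_smul, add_zero, one_smul, Prod.fst_add, Prod.snd_add,
      map_add, halt, zero_add] at h
    have h' : η p.2 d₂.2 + d₂.1 = 0 := by
      rw [← h]; abel
    exact eq_neg_of_add_eq_zero_left h'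
  intro c₁ c₂ α β
  rw [hρ]
  simp only [Prod.fst_add, Prod.snd_add, Prod.smul_fst, Prod.smul_snd,
    smul_add, smul_smul, map_add, map_smul, LinearMap.add_apply,
    LinearMap.smul_apply, halt, smul_zero, zero_add, add_zero]
  rw [hskew d₁.2 p.2, hskew d₂.2 p.2, hskew d₂.2 d₁.2, h₁, h₂]
  module
end

section
/- Let η be a nondegenerate alternating bilinear map V × V → V' and ρ the induced semiform on Y = V' × V. Let F : Y → Y be given by F([v,u]) = [ψ₁(v) + ψ₂(u) + v₀, φ(u) + u₀], where ψ₁ : V' → V' and φ : V → V are linear bijections, ψ₂ : V → V' is linear, v₀ ∈ V', u₀ ∈ V, and suppose (a) ψ₂(u) = η(φ(u), u₀) for all u ∈ V, and (b) η(φ(u₁), φ(u₂)) = ψ₁(η(u₁,u₂)) for all u₁,u₂ ∈ V. Then ρ(F(p₁), F(p₂)) = ψ₁(ρ(p₁,p₂)) for all p₁, p₂ ∈ Y; in particular F preserves the relation ρ(p₁,p₂) = 0. -/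
theorem stmt17 {F V V' : Type*} [Field F] [AddCommGroup V] [Module F V]
    [AddCommGroup V'] [Module F V']
    (h2 : (2 : F) ≠ 0) (η : V →ₗ[F] V →ₗ[F] V') (halt : ∀ u : V, η u u = 0)
    (hnd : ∀ u : V, u ≠ 0 → ∃ y : V, η u y ≠ 0)
    (ρ : (V' × V) → (V' × V) → V')
    (hρ : ∀ p q : V' × V, ρ p q = η p.2 q.2 - (p.1 - q.1))
    (ψ₁ : V' →ₗ[F] V') (hψ₁ : Function.Bijective ψ₁)
    (φ : V →ₗ[F] V) (hφ : Function.Bijective φ)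
    (ψ₂ : V →ₗ[F] V') (v₀ : V') (u₀ : V)
    (T : (V' × V) → (V' × V))
    (hT : ∀ (v : V') (u : V), T (v, u) = (ψ₁ v + ψ₂ u + v₀, φ u + u₀))
    (ha : ∀ u : V, ψ₂ u = η (φ u) u₀)
    (hb : ∀ u₁ u₂ : V, η (φ u₁) (φ u₂) = ψ₁ (η u₁ u₂)) :
    (∀ p₁ p₂ : V' × V, ρ (T p₁) (T p₂) = ψ₁ (ρ p₁ p₂)) ∧
    (∀ p₁ p₂ : V' × V, ρ p₁ p₂ = 0 → ρ (T p₁) (T p₂) = 0) := by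
  have hskew : ∀ a b : V, η a b = - η b a := by
    intro a b
    have h := halt (a + b)
    simp only [map_add, LinearMap.add_apply, halt] at h
    linear_combination (norm := abel) h
  have hmain : ∀ p₁ p₂ : V' × V, ρ (T p₁) (T p₂) = ψ₁ (ρ p₁ p₂) := by
    rintro ⟨v₁, u₁⟩ ⟨v₂, u₂⟩
    rw [hT, hT, hρ, hρ]
    simp only [map_add, LinearMap.add_apply, map_sub, halt, hb, ha,
      hskew u₀ (φ u₂)]
    abel
  refine ⟨hmain, fun p₁ p₂ h0 => ?_⟩
  rw [hmain, h0, map_zero]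
end

section
/- Let η be an alternating bilinear map V × V → V' and ρ the induced semiform on Y = V' × V. For any u₀ ∈ V and v₀ ∈ V', the map F : Y → Y defined by F([v,u]) = [v + η(u,u₀) + v₀, u + u₀] is a bijection satisfying ρ(F(p₁),F(p₂)) = ρ(p₁,p₂) for all p₁, p₂ ∈ Y, and F maps [0,0] to [v₀,u₀]. Consequently the automorphism group of the relation ρ(·,·)=0 acts transitively on Y. -/
theorem stmt18 {F V V' : Type*} [Field F] [AddCommGroup V] [Module F V]
    [AddCommGroup V'] [Module F V']
    (h2 : (2 : F) ≠ 0) (η : V →ₗ[F] V →ₗ[F] V') (halt : ∀ u : V, η u u = 0)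
    (ρ : (V' × V) → (V' × V) → V')
    (hρ : ∀ p q : V' × V, ρ p q = η p.2 q.2 - (p.1 - q.1))
    (v₀ : V') (u₀ : V)
    (T : (V' × V) → (V' × V))
    (hT : ∀ (v : V') (u : V), T (v, u) = (v + η u u₀ + v₀, u + u₀)) :
    Function.Bijective T ∧
    (∀ p₁ p₂ : V' × V, ρ (T p₁) (T p₂) = ρ p₁ p₂) ∧
    T (0, 0) = (v₀, u₀) := by
  refine ⟨?_, ?_, ?_⟩
  · constructor
    · rintro ⟨v₁, u₁⟩ ⟨v₂, u₂⟩ h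
      rw [hT, hT] at h
      obtain ⟨h1, h2'⟩ := Prod.mk.injEq .. ▸ h
      have hu : u₁ = u₂ := by
        have := congrArg (· - u₀) h2'
        simpa using this
      subst hu
      have : v₁ = v₂ := by
        have := congrArg (· - (η u₁ u₀ + v₀)) h1
        simp only [add_assoc] at this
        simpa using this
      simp [this]
    · rintro ⟨v, u⟩
      refine ⟨(v - η (u - u₀) u₀ - v₀, u - u₀), ?_⟩
      rw [hT]
      simp only [sub_add_cancel]
      congr 1
      abel
  · rintro ⟨v₁, u₁⟩ ⟨v₂, u₂⟩
    rw [hT, hT, hρ, hρ]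
    simp only [map_add, LinearMap.add_apply]
    have hskew : ∀ a b : V, η a b = - η b a := by
      intro a b
      have h := halt (a + b)
      simp only [map_add, LinearMap.add_apply, halt] at h
      linear_combination (norm := abel) h
    rw [halt, hskew u₀ u₂]
    abel
  · rw [hT]; simp [halt]
end

section
/- Let η be a nondegenerate symplectic (alternating bilinear) form on an F-vector space V, and for points p_i = [a_i,u_i] of Y = F × V define ρ(p₁,p₂) = η(u₁,u₂) - (a₁-a₂), and the bisectors L_t(p₁,p₂) = { p : ρ(p₁,p) = ρ(p₂,p) } and L_m(p₁,p₂) = { p : ρ(p₁,p) = ρ(p,p₂) }. Then L_t(p₁,p₂) = L_t(p₁',p₂') if and only if p₂' - p₁' = γ(p₂ - p₁) for some nonzero scalar γ, and L_m(p₁,p₂) = L_m(p₁',p₂') if and only if p₁ + p₂ = p₁' + p₂'. -/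
theorem stmt19 {F V : Type*} [Field F] [AddCommGroup V] [Module F V]
    (h2 : (2 : F) ≠ 0) (η : V →ₗ[F] V →ₗ[F] F) (halt : ∀ u : V, η u u = 0)
    (hnd : ∀ u : V, u ≠ 0 → ∃ y : V, η u y ≠ 0)
    (ρ : (F × V) → (F × V) → F)
    (hρ : ∀ p q : F × V, ρ p q = η p.2 q.2 - (p.1 - q.1))
    (p₁ p₂ q₁ q₂ : F × V) (hp : p₁ ≠ p₂) (hq : q₁ ≠ q₂) :
    ({ p : F × V | ρ p₁ p = ρ p₂ p } = { p : F × V | ρ q₁ p = ρ q₂ p }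
        ↔ ∃ γ : F, γ ≠ 0 ∧ q₂ - q₁ = γ • (p₂ - p₁)) ∧
    ({ p : F × V | ρ p₁ p = ρ p p₂ } = { p : F × V | ρ q₁ p = ρ p q₂ }
        ↔ p₁ + p₂ = q₁ + q₂) := by
  have hskew : ∀ u w : V, η w u = - η u w := by
    intro u w
    have h := halt (u + w)
    simp only [map_add, LinearMap.add_apply, halt] at h
    linear_combination h
  have hnd' : ∀ u : V, (∀ y : V, η u y = 0) → u = 0 := by
    intro u hu
    by_contra h
    obtain ⟨y, hy⟩ := hnd u h
    exact hy (hu y)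
  have hset1 : ∀ (r s p : F × V),
      (ρ r p = ρ s p) ↔ η (r.2 - s.2) p.2 = r.1 - s.1 := by
    intro r s p
    rw [hρ, hρ]
    simp only [map_sub, LinearMap.sub_apply]
    constructor <;> intro h <;> linear_combination h
  have hset2 : ∀ (r s p : F × V),
      (ρ r p = ρ p s) ↔ η (r.2 + s.2) p.2 = r.1 + s.1 - 2 * p.1 := by
    intro r s p
    rw [hρ, hρ, hskew s.2 p.2]
    simp only [map_add, LinearMap.add_apply]
    constructor <;> intro h <;> linear_combination h
  constructor
  · rw [Set.ext_iff]
    simp only [Set.mem_setOf_eq, hset1]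
    set v := p₁.2 - p₂.2 with hv
    set b := p₁.1 - p₂.1 with hb
    set v' := q₁.2 - q₂.2 with hv'
    set b' := q₁.1 - q₂.1 with hb'
    constructor
    · intro h
      by_cases hvz : v = 0
      · -- degenerate case: the bisector is empty
        have hbne : b ≠ 0 := by
          intro hb0
          exact hp (Prod.ext (by rw [← sub_eq_zero]; exact hb0)
            (by rw [← sub_eq_zero]; exact hvz))
        have hv'z : v' = 0 := by
          by_contra hv'z
          obtain ⟨y, hy⟩ := hnd v' hv'z
          have hmem : (η v') ((b' / η v' y) • y) = b' := by
            rw [map_smul, smul_eq_mul]; exact div_mul_cancel₀ b' hy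
          have hcon := (h (0, (b' / η v' y) • y)).mpr hmem
          rw [hvz, map_zero, LinearMap.zero_apply] at hcon
          exact hbne hcon.symm
        have hb'ne : b' ≠ 0 := by
          intro hb0
          exact hq (Prod.ext (by rw [← sub_eq_zero]; exact hb0)
            (by rw [← sub_eq_zero]; exact hv'z))
        refine ⟨b' / b, div_ne_zero hb'ne hbne, ?_⟩
        have hpz : p₂.2 - p₁.2 = 0 := by
          have hv0 : p₁.2 - p₂.2 = 0 := hvz
          rw [← neg_sub p₁.2, hv0, neg_zero]
        have hqz : q₂.2 - q₁.2 = 0 := by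
          have hv0 : q₁.2 - q₂.2 = 0 := hv'z
          rw [← neg_sub q₁.2, hv0, neg_zero]
        apply Prod.ext
        · show q₂.1 - q₁.1 = (b' / b) • (p₂.1 - p₁.1)
          rw [smul_eq_mul, hb', hb] at *
          field_simp
          ring
        · show q₂.2 - q₁.2 = (b' / b) • (p₂.2 - p₁.2)
          rw [hqz, hpz, smul_zero]
      · -- nondegenerate case
        obtain ⟨y, hy⟩ := hnd v hvz
        set w₀ := (b / η v y) • y with hw₀
        have hvw₀ : η v w₀ = b := by
          rw [hw₀, map_smul, smul_eq_mul]; exact div_mul_cancel₀ b hy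
        have hv'w₀ : η v' w₀ = b' := (h (0, w₀)).mp hvw₀
        have hker : ∀ z : V, η v z = 0 ↔ η v' z = 0 := by
          intro z
          have hz := h (0, w₀ + z)
          simp only [map_add] at hz
          rw [hvw₀, hv'w₀] at hz
          constructor
          · intro h0
            have := hz.mp (by rw [h0, add_zero])
            linear_combination this
          · intro h0
            have := hz.mpr (by rw [h0, add_zero])
            linear_combination this
        have hgy : η v' y ≠ 0 := fun h0 => hy ((hker y).mpr h0)
        set γ := η v' y / η v y with hγdef
        have hγ : γ ≠ 0 := div_ne_zero hgy hy
        have hprop : ∀ w : V, η v' w = γ * η v w := by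
          intro w
          have hz : η v (w - (η v w / η v y) • y) = 0 := by
            rw [map_sub, map_smul, smul_eq_mul, div_mul_cancel₀ _ hy, sub_self]
          have hz' := (hker _).mp hz
          rw [map_sub, map_smul, smul_eq_mul, div_mul_eq_mul_div, sub_eq_zero,
            eq_div_iff hy] at hz'
          rw [hγdef, div_mul_eq_mul_div, eq_div_iff hy]
          linear_combination hz'
        have hv'γ : v' = γ • v := by
          rw [← sub_eq_zero]
          apply hnd'
          intro w
          rw [map_sub, LinearMap.sub_apply, map_smul, LinearMap.smul_apply,
            smul_eq_mul, hprop w, sub_self]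
        have hb'γ : b' = γ * b := by rw [← hvw₀, ← hv'w₀, hprop w₀]
        refine ⟨γ, hγ, ?_⟩
        rw [hv', hv] at hv'γ
        rw [hb', hb] at hb'γ
        apply Prod.ext
        · show q₂.1 - q₁.1 = γ • (p₂.1 - p₁.1)
          rw [smul_eq_mul]
          linear_combination -hb'γ
        · show q₂.2 - q₁.2 = γ • (p₂.2 - p₁.2)
          rw [← neg_sub q₁.2 q₂.2, hv'γ, ← smul_neg, neg_sub]
    · rintro ⟨γ, hγ, hqq⟩ p
      have h1 : q₂.1 - q₁.1 = γ * (p₂.1 - p₁.1) := congrArg Prod.fst hqq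
      have h2 : q₂.2 - q₁.2 = γ • (p₂.2 - p₁.2) := congrArg Prod.snd hqq
      have hv'' : v' = γ • v := by
        rw [hv', hv, ← neg_sub q₂.2, h2, ← smul_neg, neg_sub]
      have hb'' : b' = γ * b := by
        rw [hb', hb]
        linear_combination -h1
      rw [hv'', hb'', map_smul, LinearMap.smul_apply, smul_eq_mul]
      constructor
      · intro h; rw [h]
      · intro h; exact mul_left_cancel₀ hγ h
  · rw [Set.ext_iff]
    simp only [Set.mem_setOf_eq, hset2]
    constructor
    · intro h
      have key : ∀ w : V,
          η (q₁.2 + q₂.2) w - η (p₁.2 + p₂.2) w = (q₁.1 + q₂.1) - (p₁.1 + p₂.1) := by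
        intro w
        have hc := h ((p₁.1 + p₂.1 - η (p₁.2 + p₂.2) w) / 2, w)
        dsimp only at hc
        have hm := hc.mp (by field_simp; ring)
        field_simp at hm
        simp only [map_add, LinearMap.add_apply] at hm ⊢
        linear_combination hm
      have h0 := key 0
      simp only [map_zero] at h0
      have hsum1 : p₁.1 + p₂.1 = q₁.1 + q₂.1 := by linear_combination h0
      have hsum2 : p₁.2 + p₂.2 = q₁.2 + q₂.2 := by
        have hz : q₁.2 + q₂.2 - (p₁.2 + p₂.2) = 0 := by
          apply hnd'
          intro w
          rw [map_sub, LinearMap.sub_apply, key w]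
          linear_combination -hsum1
        exact (sub_eq_zero.mp hz).symm
      exact Prod.ext hsum1 hsum2
    · intro h p
      have h1 : p₁.1 + p₂.1 = q₁.1 + q₂.1 := congrArg Prod.fst h
      have h2 : p₁.2 + p₂.2 = q₁.2 + q₂.2 := congrArg Prod.snd h
      rw [← h1, ← h2]
end
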